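/- Let D be a triangulated category with a t-structure t. The triangulated factorization system F_t = (E_t, M_t) is a normal triangulated torsion theory: both E_t and M_t satisfy the 3-for-2 property, and whenever X → 0 factors as X →e→ T →m→ 0 with e ∈ E_t, m ∈ M_t, and R → X →e→ T → ΣR is a distinguished triangle, the morphism R → 0 belongs to E_t. -/

import Mathlib

open CategoryTheory Category Limits Pretriangulated ZeroObject

universe v u w

section Defs

variable {D : Type u} [Category.{v} D] [HasZeroObject D] [Preadditive D]
  [HasShift D ℤ] [∀ n : ℤ, (shiftFunctor D n).Additive] [Pretriangulated D]

/-- Homotopy orthogonality (Def. 1.1): conditions (HO1) and (HO2), stated for every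
completion of `e` and `m` to distinguished triangles. -/
def HOrth {E₀ E₁ M₀ M₁ : D} (e : E₀ ⟶ E₁) (m : M₀ ⟶ M₁) : Prop :=
  ∀ (Ce : D) (αe : E₁ ⟶ Ce) (βe : Ce ⟶ E₀⟦(1:ℤ)⟧),
    Triangle.mk e αe βe ∈ (distTriang D) →
    ∀ (Cm : D) (αm : M₁ ⟶ Cm) (βm : Cm ⟶ M₀⟦(1:ℤ)⟧),
      Triangle.mk m αm βm ∈ (distTriang D) →
      (∀ φ : Ce ⟶ Cm⟦(-1:ℤ)⟧,
        αe ≫ φ ≫ βm⟦(-1:ℤ)⟧' ≫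
          (shiftFunctorCompIsoId D (1:ℤ) (-1:ℤ) (by omega)).hom.app M₀ = 0) ∧
      Function.Injective (fun φ : Ce ⟶ Cm => αe ≫ φ ≫ βm)

/-- The right homotopy-orthogonal class `E^⊥`. -/
def rightOrth (E : MorphismProperty D) : MorphismProperty D :=
  fun _ _ m => ∀ ⦃A B : D⦄ (e : A ⟶ B), E e → HOrth e m

/-- The left homotopy-orthogonal class `^⊥M`. -/
def leftOrth (M : MorphismProperty D) : MorphismProperty D :=
  fun _ _ e => ∀ ⦃A B : D⦄ (m : A ⟶ B), M m → HOrth e m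

/-- The 3-for-2 property for a class of morphisms. -/
def ThreeForTwo (P : MorphismProperty D) : Prop :=
  ∀ ⦃X Y Z : D⦄ (f : X ⟶ Y) (g : Y ⟶ Z),
    (P f → P g → P (f ≫ g)) ∧ (P f → P (f ≫ g) → P g) ∧ (P g → P (f ≫ g) → P f)

/-- A triangulated pre-factorization system (Def. 1.12(1)). -/
structure IsTriPFS (E M : MorphismProperty D) : Prop where
  right_eq : rightOrth E = M
  left_eq : leftOrth M = E
  shiftE : ∀ ⦃X Y : D⦄ (f : X ⟶ Y), E f → E (f⟦(1:ℤ)⟧')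

/-- A triangulated factorization system (Def. 1.12(2)). -/
structure IsTriFS (E M : MorphismProperty D) extends IsTriPFS E M : Prop where
  fact : ∀ ⦃X Y : D⦄ (f : X ⟶ Y),
    ∃ (P : D) (e : X ⟶ P) (m : P ⟶ Y), E e ∧ M m ∧ e ≫ m = f

/-- A normal triangulated torsion theory (Defs. 1.15, 1.16). -/
structure IsNormalTTT (E M : MorphismProperty D) extends IsTriFS E M : Prop where
  three_E : ThreeForTwo E
  three_M : ThreeForTwo M
  normal : ∀ ⦃X T : D⦄ (e : X ⟶ T) (m : T ⟶ (0:D)), E e → M m →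
    ∀ ⦃R : D⦄ (r : R ⟶ X) (δ : T ⟶ R⟦(1:ℤ)⟧),
      Triangle.mk r e δ ∈ (distTriang D) → E (0 : R ⟶ (0:D))

/-- A middling good morphism of triangles (Neeman): one extending to a 3×3 diagram
whose rows and columns are distinguished triangles, all squares commuting except
the lower-right one, which anticommutes. -/
def MiddlingGood {A₀ B₀ C₀ A₁ B₁ C₁ : D}
    (φ₀ : A₀ ⟶ B₀) (ψ₀ : B₀ ⟶ C₀) (δ₀ : C₀ ⟶ A₀⟦(1:ℤ)⟧)
    (φ₁ : A₁ ⟶ B₁) (ψ₁ : B₁ ⟶ C₁) (δ₁ : C₁ ⟶ A₁⟦(1:ℤ)⟧)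
    (a : A₀ ⟶ A₁) (b : B₀ ⟶ B₁) (c : C₀ ⟶ C₁) : Prop :=
  ∃ (Ca Cb Cc : D)
    (αa : A₁ ⟶ Ca) (βa : Ca ⟶ A₀⟦(1:ℤ)⟧)
    (αb : B₁ ⟶ Cb) (βb : Cb ⟶ B₀⟦(1:ℤ)⟧)
    (αc : C₁ ⟶ Cc) (βc : Cc ⟶ C₀⟦(1:ℤ)⟧)
    (fa : Ca ⟶ Cb) (fb : Cb ⟶ Cc) (δ : Cc ⟶ Ca⟦(1:ℤ)⟧),
    Triangle.mk a αa βa ∈ (distTriang D) ∧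
    Triangle.mk b αb βb ∈ (distTriang D) ∧
    Triangle.mk c αc βc ∈ (distTriang D) ∧
    Triangle.mk fa fb δ ∈ (distTriang D) ∧
    φ₁ ≫ αb = αa ≫ fa ∧
    ψ₁ ≫ αc = αb ≫ fb ∧
    δ₁ ≫ αa⟦(1:ℤ)⟧' = αc ≫ δ ∧
    βa ≫ φ₀⟦(1:ℤ)⟧' = fa ≫ βb ∧
    βb ≫ ψ₀⟦(1:ℤ)⟧' = fb ≫ βc ∧
    δ ≫ βa⟦(1:ℤ)⟧' = -(βc ≫ δ₀⟦(1:ℤ)⟧')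

end Defs

/-- A t-structure on a triangulated category (Def. 2.1), together with choices of the
truncation functors `τ^{≤0}` (right adjoint to the inclusion of `D^{≤0}`) and
`τ^{≥1}` (left adjoint to the inclusion of `D^{≥1}`).  Here `ge` is `D^{≥0}` and
membership of `X` in `D^{≥1} = Σ⁻¹ D^{≥0}` is expressed as `X⟦1⟧ ∈ ge`. -/
structure TData (D : Type u) [Category.{v} D] [HasZeroObject D] [Preadditive D]
    [HasShift D ℤ] [∀ n : ℤ, (shiftFunctor D n).Additive] [Pretriangulated D] where
  le : Set D
  ge : Set D
  le_iso : ∀ ⦃X Y : D⦄, (X ≅ Y) → X ∈ le → Y ∈ le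
  ge_iso : ∀ ⦃X Y : D⦄, (X ≅ Y) → X ∈ ge → Y ∈ ge
  shift_le : ∀ ⦃X : D⦄, X ∈ le → X⟦(1:ℤ)⟧ ∈ le
  shift_ge : ∀ ⦃X : D⦄, X⟦(1:ℤ)⟧ ∈ ge → X ∈ ge
  hom_zero : ∀ ⦃X Y : D⦄ (f : X ⟶ Y), X ∈ le → Y⟦(1:ℤ)⟧ ∈ ge → f = 0
  tri : ∀ X : D, ∃ (A B : D) (i : A ⟶ X) (p : X ⟶ B) (δ : B ⟶ A⟦(1:ℤ)⟧),
    A ∈ le ∧ B⟦(1:ℤ)⟧ ∈ ge ∧ Triangle.mk i p δ ∈ (distTriang D)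
  tle : D ⥤ D
  σ : tle ⟶ 𝟭 D
  tle_mem : ∀ X : D, tle.obj X ∈ le
  tle_univ : ∀ ⦃A : D⦄, A ∈ le → ∀ X : D,
    Function.Bijective (fun g : A ⟶ tle.obj X => g ≫ σ.app X)
  tge : D ⥤ D
  ρ : 𝟭 D ⟶ tge
  tge_mem : ∀ X : D, (tge.obj X)⟦(1:ℤ)⟧ ∈ ge
  tge_univ : ∀ X : D, ∀ ⦃B : D⦄, B⟦(1:ℤ)⟧ ∈ ge →
    Function.Bijective (fun g : tge.obj X ⟶ B => ρ.app X ≫ g)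

section TDefs

variable {D : Type u} [Category.{v} D] [HasZeroObject D] [Preadditive D]
  [HasShift D ℤ] [∀ n : ℤ, (shiftFunctor D n).Additive] [Pretriangulated D]

/-- `E_t`: morphisms `φ` with `τ^{≥1} φ` invertible. -/
def Et (t : TData D) : MorphismProperty D := fun _ _ φ => IsIso (t.tge.map φ)

/-- `M_t`: morphisms `φ` with `τ^{≤0} φ` invertible. -/
def Mt (t : TData D) : MorphismProperty D := fun _ _ φ => IsIso (t.tle.map φ)

end TDefs

section Aux

variable {D : Type u} [Category.{v} D] [HasZeroObject D] [Preadditive D]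
  [HasShift D ℤ] [∀ n : ℤ, (shiftFunctor D n).Additive] [Pretriangulated D]

namespace TData

variable (t : TData D)

/-! ### Basic orthogonality and zero lemmas -/

lemma ge_neg_shift {W : D} (hW : W ∈ t.ge) : (W⟦(-1:ℤ)⟧)⟦(1:ℤ)⟧ ∈ t.ge :=
  t.ge_iso ((shiftEquiv D (1:ℤ)).counitIso.app W).symm hW

lemma hom_zero_shift {A W : D} (hA : A ∈ t.le) (hW : W ∈ t.ge)
    (f : A⟦(1:ℤ)⟧ ⟶ W) : f = 0 := by
  set adj := (shiftEquiv D (1:ℤ)).toAdjunction with hadj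
  have h1 : adj.homEquiv A W f = 0 :=
    t.hom_zero _ hA (t.ge_neg_shift hW)
  have := congrArg (adj.homEquiv A W).symm h1
  erw [Equiv.symm_apply_apply] at this
  rw [this, Adjunction.homEquiv_symm_apply]
  simp
  rfl

lemma isZero_tle_of (X : D) (h : ∀ (A : D), A ∈ t.le → ∀ f : A ⟶ X, f = 0) :
    IsZero (t.tle.obj X) := by
  rw [IsZero.iff_id_eq_zero]
  apply (t.tle_univ (t.tle_mem X) X).1
  simpa using h _ (t.tle_mem X) (t.σ.app X)

lemma isZero_tge_of (X : D) (h : ∀ (W : D), W⟦(1:ℤ)⟧ ∈ t.ge → ∀ f : X ⟶ W, f = 0) :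
    IsZero (t.tge.obj X) := by
  rw [IsZero.iff_id_eq_zero]
  apply (t.tge_univ X (t.tge_mem X)).1
  simpa using h _ (t.tge_mem X) (t.ρ.app X)

lemma isZero_shift {X : D} (h : IsZero X) (n : ℤ) : IsZero (X⟦n⟧) := by
  rw [IsZero.iff_id_eq_zero] at h ⊢
  rw [← (shiftFunctor D n).map_id, h, Functor.map_zero]

/-! ### Characterizations of `Et` and `Mt` -/

lemma isIso_of_isZero {X Y : D} (f : X ⟶ Y) (hX : IsZero X) (hY : IsZero Y) :
    IsIso f := ⟨0, hX.eq_of_src _ _, hY.eq_of_src _ _⟩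

lemma Et_iff {X Y : D} (φ : X ⟶ Y) :
    Et t φ ↔ ∀ (W : D), W⟦(1:ℤ)⟧ ∈ t.ge →
      Function.Bijective (fun g : Y ⟶ W => φ ≫ g) := by
  have conj : ∀ (W : D) (hW : W⟦(1:ℤ)⟧ ∈ t.ge) (g : t.tge.obj Y ⟶ W),
      t.ρ.app X ≫ t.tge.map φ ≫ g = φ ≫ t.ρ.app Y ≫ g := by
    intro W hW g
    rw [← assoc, ← assoc]
    congr 1
    simpa using (t.ρ.naturality φ).symm
  constructor
  · intro h W hW
    have hmap : Function.Bijective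
        (fun g : t.tge.obj Y ⟶ W => t.tge.map φ ≫ g) := by
      haveI : IsIso (t.tge.map φ) := h
      constructor
      · intro a b hab
        simpa using congrArg (fun z => inv (t.tge.map φ) ≫ z) hab
      · intro g
        exact ⟨inv (t.tge.map φ) ≫ g, by simp⟩
    let eY := Equiv.ofBijective _ (t.tge_univ Y hW)
    have : (fun g : Y ⟶ W => φ ≫ g) =
        (fun g : t.tge.obj X ⟶ W => t.ρ.app X ≫ g) ∘
          (fun g : t.tge.obj Y ⟶ W => t.tge.map φ ≫ g) ∘ eY.symm := by
      funext g
      have hg : t.ρ.app Y ≫ (eY.symm g : t.tge.obj Y ⟶ W) = g :=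
        eY.apply_symm_apply g
      simp only [Function.comp]
      rw [conj W hW, hg]
    rw [this]
    exact (t.tge_univ X hW).comp (hmap.comp eY.symm.bijective)
  · intro h
    have key : ∀ (W : D), W⟦(1:ℤ)⟧ ∈ t.ge →
        Function.Bijective (fun g : t.tge.obj Y ⟶ W => t.tge.map φ ≫ g) := by
      intro W hW
      let eX := Equiv.ofBijective _ (t.tge_univ X hW)
      have : (fun g : t.tge.obj Y ⟶ W => t.tge.map φ ≫ g) =
          eX.symm ∘ (fun g : Y ⟶ W => φ ≫ g) ∘
            (fun g : t.tge.obj Y ⟶ W => t.ρ.app Y ≫ g) := by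
        funext g
        simp only [Function.comp]
        rw [← conj W hW]
        exact (eX.symm_apply_apply _).symm
      rw [this]
      exact eX.symm.bijective.comp ((h W hW).comp (t.tge_univ Y hW))
    obtain ⟨k, hk⟩ := (key _ (t.tge_mem X)).2 (𝟙 _)
    have hk2 : k ≫ t.tge.map φ = 𝟙 _ := by
      apply (key _ (t.tge_mem Y)).1
      show t.tge.map φ ≫ k ≫ t.tge.map φ = t.tge.map φ ≫ 𝟙 _
      rw [← assoc, show t.tge.map φ ≫ k = 𝟙 _ from hk, id_comp, comp_id]
    exact ⟨k, hk, hk2⟩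

lemma Mt_iff {X Y : D} (φ : X ⟶ Y) :
    Mt t φ ↔ ∀ (A : D), A ∈ t.le →
      Function.Bijective (fun g : A ⟶ X => g ≫ φ) := by
  have conj : ∀ (A : D) (hA : A ∈ t.le) (g : A ⟶ t.tle.obj X),
      (g ≫ t.tle.map φ) ≫ t.σ.app Y = (g ≫ t.σ.app X) ≫ φ := by
    intro A hA g
    rw [assoc, assoc]
    congr 1
    simpa using t.σ.naturality φ
  constructor
  · intro h A hA
    have hmap : Function.Bijective
        (fun g : A ⟶ t.tle.obj X => g ≫ t.tle.map φ) := by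
      haveI : IsIso (t.tle.map φ) := h
      constructor
      · intro a b hab
        simpa using congrArg (fun z => z ≫ inv (t.tle.map φ)) hab
      · intro g
        exact ⟨g ≫ inv (t.tle.map φ), by simp⟩
    let eX := Equiv.ofBijective _ (t.tle_univ hA X)
    have : (fun g : A ⟶ X => g ≫ φ) =
        (fun g : A ⟶ t.tle.obj Y => g ≫ t.σ.app Y) ∘
          (fun g : A ⟶ t.tle.obj X => g ≫ t.tle.map φ) ∘ eX.symm := by
      funext g
      have hg : (eX.symm g : A ⟶ t.tle.obj X) ≫ t.σ.app X = g :=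
        eX.apply_symm_apply g
      simp only [Function.comp]
      rw [conj A hA, hg]
    rw [this]
    exact (t.tle_univ hA Y).comp (hmap.comp eX.symm.bijective)
  · intro h
    have key : ∀ (A : D), A ∈ t.le →
        Function.Bijective (fun g : A ⟶ t.tle.obj X => g ≫ t.tle.map φ) := by
      intro A hA
      let eY := Equiv.ofBijective _ (t.tle_univ hA Y)
      have : (fun g : A ⟶ t.tle.obj X => g ≫ t.tle.map φ) =
          eY.symm ∘ (fun g : A ⟶ X => g ≫ φ) ∘
            (fun g : A ⟶ t.tle.obj X => g ≫ t.σ.app X) := by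
        funext g
        simp only [Function.comp]
        rw [← conj A hA]
        exact (eY.symm_apply_apply _).symm
      rw [this]
      exact eY.symm.bijective.comp ((h A hA).comp (t.tle_univ hA X))
    obtain ⟨k, hk⟩ := (key _ (t.tle_mem Y)).2 (𝟙 _)
    have hk2 : t.tle.map φ ≫ k = 𝟙 _ := by
      apply (key _ (t.tle_mem X)).1
      show (t.tle.map φ ≫ k) ≫ t.tle.map φ = 𝟙 _ ≫ t.tle.map φ
      rw [assoc, show k ≫ t.tle.map φ = 𝟙 _ from hk, id_comp, comp_id]
    exact ⟨k, hk2, hk⟩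

/-! ### Exactness along truncation triangles -/

lemma triB_bij {A Xo B : D} {a : A ⟶ Xo} {b : Xo ⟶ B} {δ : B ⟶ A⟦(1:ℤ)⟧}
    (hT : Triangle.mk a b δ ∈ distTriang D) (hA : A ∈ t.le)
    (W : D) (hW : W⟦(1:ℤ)⟧ ∈ t.ge) :
    Function.Bijective (fun g : B ⟶ W => b ≫ g) := by
  constructor
  · intro g g' hgg
    have h0 : b ≫ (g - g') = 0 := by
      rw [Preadditive.comp_sub, sub_eq_zero]; exact hgg
    obtain ⟨y, hy⟩ := Triangle.yoneda_exact₃ _ hT (g - g') h0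
    rw [t.hom_zero y (t.shift_le hA) hW, comp_zero] at hy
    exact sub_eq_zero.1 hy
  · intro x
    obtain ⟨g, hg⟩ := Triangle.yoneda_exact₂ _ hT x (t.hom_zero _ hA hW)
    exact ⟨g, hg.symm⟩

lemma triA_bij {A Xo B : D} {a : A ⟶ Xo} {b : Xo ⟶ B} {δ : B ⟶ A⟦(1:ℤ)⟧}
    (hT : Triangle.mk a b δ ∈ distTriang D) (hB : B⟦(1:ℤ)⟧ ∈ t.ge)
    (A' : D) (hA' : A' ∈ t.le) :
    Function.Bijective (fun g : A' ⟶ A => g ≫ a) := by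
  constructor
  · intro g g' hgg
    have h0 : (g - g') ≫ a = 0 := by
      rw [Preadditive.sub_comp, sub_eq_zero]; exact hgg
    obtain ⟨y, hy⟩ := Triangle.coyoneda_exact₂ _ (inv_rot_of_distTriang _ hT)
      (g - g') (by exact h0)
    rw [t.hom_zero y hA' (t.ge_neg_shift (t.shift_ge hB)), zero_comp] at hy
    exact sub_eq_zero.1 hy
  · intro x
    obtain ⟨g, hg⟩ := Triangle.coyoneda_exact₂ _ hT x (t.hom_zero _ hA' hB)
    exact ⟨g, hg.symm⟩

/-! ### Membership criteria -/

lemma mem_le_of (C : D) (h : ∀ (W : D), W⟦(1:ℤ)⟧ ∈ t.ge → ∀ f : C ⟶ W, f = 0) :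
    C ∈ t.le := by
  obtain ⟨A, B, i, p, δ, hA, hB, hT⟩ := t.tri C
  have hB0 : IsZero B := by
    rw [IsZero.iff_id_eq_zero]
    obtain ⟨g, hg⟩ := Triangle.yoneda_exact₃ _ hT (𝟙 B)
      (by exact (comp_id p).trans (h B hB p))
    rw [hg, t.hom_zero g (t.shift_le hA) hB, comp_zero]; rfl
  have : IsIso i := (Triangle.isZero₃_iff_isIso₁ _ hT).1 hB0
  exact t.le_iso (asIso i) hA

lemma mem_ge_of (Xo : D) (h : ∀ (A : D), A ∈ t.le → ∀ f : A⟦(1:ℤ)⟧ ⟶ Xo, f = 0) :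
    Xo ∈ t.ge := by
  obtain ⟨A, B, i, p, δ, hA, hB, hT⟩ := t.tri (Xo⟦(-1:ℤ)⟧)
  have hi : i⟦(1:ℤ)⟧' = 0 := by
    have h2 : i⟦(1:ℤ)⟧' ≫ ((shiftEquiv D (1:ℤ)).counitIso.hom.app Xo) = 0 :=
      h _ hA _
    exact (cancel_mono ((shiftEquiv D (1:ℤ)).counitIso.hom.app Xo)).1 (h2.trans zero_comp.symm)

  have hA0 : IsZero A := by
    have hA1 : IsZero (A⟦(1:ℤ)⟧) := by
      rw [IsZero.iff_id_eq_zero]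
      obtain ⟨s, hs⟩ := Triangle.coyoneda_exact₁ _ hT (𝟙 (A⟦(1:ℤ)⟧))
        (by exact (id_comp _).trans hi)
      rw [hs, t.hom_zero s (t.shift_le hA) hB, zero_comp]; rfl
    rw [IsZero.iff_id_eq_zero] at hA1 ⊢
    apply (shiftFunctor D (1:ℤ)).map_injective
    rw [(shiftFunctor D (1:ℤ)).map_id, Functor.map_zero]
    exact hA1
  have : IsIso p := (Triangle.isZero₁_iff_isIso₂ _ hT).1 hA0
  have h5 : (Xo⟦(-1:ℤ)⟧)⟦(1:ℤ)⟧ ∈ t.ge :=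
    t.ge_iso ((shiftFunctor D (1:ℤ)).mapIso (asIso p)).symm hB
  exact t.ge_iso ((shiftEquiv D (1:ℤ)).counitIso.app Xo) h5

/-! ### Cones of `Et` and `Mt` morphisms -/

lemma shift_fac {X Y Z : D} (f : X ⟶ Y) (y : X⟦(1:ℤ)⟧ ⟶ Z)
    (hy : ∃ k : Y ⟶ Z⟦(-1:ℤ)⟧,
      (shiftEquiv D (1:ℤ)).unitIso.hom.app X ≫ y⟦(-1:ℤ)⟧' = f ≫ k) :
    ∃ k' : Y⟦(1:ℤ)⟧ ⟶ Z, y = f⟦(1:ℤ)⟧' ≫ k' := by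
  obtain ⟨k, hk⟩ := hy
  refine ⟨k⟦(1:ℤ)⟧' ≫ (shiftEquiv D (1:ℤ)).counitIso.hom.app Z, ?_⟩
  have h1 : (f ≫ k)⟦(1:ℤ)⟧' ≫ (shiftEquiv D (1:ℤ)).counitIso.hom.app Z
      = ((shiftEquiv D (1:ℤ)).unitIso.hom.app X)⟦(1:ℤ)⟧' ≫
        (y⟦(-1:ℤ)⟧')⟦(1:ℤ)⟧' ≫ (shiftEquiv D (1:ℤ)).counitIso.hom.app Z := by
    erw [← hk, Functor.map_comp, assoc]
  have h2 : (y⟦(-1:ℤ)⟧')⟦(1:ℤ)⟧' ≫ (shiftEquiv D (1:ℤ)).counitIso.hom.app Z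
      = (shiftEquiv D (1:ℤ)).counitIso.hom.app (X⟦(1:ℤ)⟧) ≫ y :=
    (shiftEquiv D (1:ℤ)).counitIso.hom.naturality y
  have h3 : ((shiftEquiv D (1:ℤ)).unitIso.hom.app X)⟦(1:ℤ)⟧' ≫
      (shiftEquiv D (1:ℤ)).counitIso.hom.app (X⟦(1:ℤ)⟧) = 𝟙 _ :=
    (shiftEquiv D (1:ℤ)).functor_unitIso_comp X
  calc y = 𝟙 _ ≫ y := (id_comp y).symm
    _ = (((shiftEquiv D (1:ℤ)).unitIso.hom.app X)⟦(1:ℤ)⟧' ≫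
        (shiftEquiv D (1:ℤ)).counitIso.hom.app (X⟦(1:ℤ)⟧)) ≫ y := by rw [h3]; rfl
    _ = ((shiftEquiv D (1:ℤ)).unitIso.hom.app X)⟦(1:ℤ)⟧' ≫
        (y⟦(-1:ℤ)⟧')⟦(1:ℤ)⟧' ≫ (shiftEquiv D (1:ℤ)).counitIso.hom.app Z := by
      erw [assoc, h2]; rfl
    _ = (f ≫ k)⟦(1:ℤ)⟧' ≫ (shiftEquiv D (1:ℤ)).counitIso.hom.app Z := h1.symm
    _ = f⟦(1:ℤ)⟧' ≫ k⟦(1:ℤ)⟧' ≫ (shiftEquiv D (1:ℤ)).counitIso.hom.app Z := by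
      erw [Functor.map_comp, assoc]

lemma Et_cone_vanish {E₀ E₁ Ce : D} {e : E₀ ⟶ E₁} (he : Et t e)
    (αe : E₁ ⟶ Ce) (βe : Ce ⟶ E₀⟦(1:ℤ)⟧)
    (hT : Triangle.mk e αe βe ∈ distTriang D)
    {W : D} (hW : W⟦(1:ℤ)⟧ ∈ t.ge) (g : Ce ⟶ W) : g = 0 := by
  have hbij := (t.Et_iff e).1 he
  have h12 : e ≫ αe = 0 := comp_distTriang_mor_zero₁₂ _ hT
  have h31 : βe ≫ e⟦(1:ℤ)⟧' = 0 := comp_distTriang_mor_zero₃₁ _ hT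
  have h2 : αe ≫ g = 0 := by
    apply (hbij W hW).1
    show e ≫ αe ≫ g = e ≫ 0
    rw [← assoc, h12, zero_comp, comp_zero]
  obtain ⟨y₀, hy₀⟩ := Triangle.yoneda_exact₃ _ hT g h2
  have hy : g = βe ≫ y₀ := hy₀
  have hWm : (W⟦(-1:ℤ)⟧)⟦(1:ℤ)⟧ ∈ t.ge := t.ge_neg_shift (t.shift_ge hW)
  obtain ⟨k, hk⟩ := (hbij _ hWm).2
    ((shiftEquiv D (1:ℤ)).unitIso.hom.app E₀ ≫ y₀⟦(-1:ℤ)⟧')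
  obtain ⟨k', hk'⟩ := shift_fac e y₀ ⟨k, hk.symm⟩
  rw [hy, hk', ← assoc, h31, zero_comp]

lemma Et_cone_le {E₀ E₁ Ce : D} {e : E₀ ⟶ E₁} (he : Et t e)
    (αe : E₁ ⟶ Ce) (βe : Ce ⟶ E₀⟦(1:ℤ)⟧)
    (hT : Triangle.mk e αe βe ∈ distTriang D) : Ce ∈ t.le :=
  t.mem_le_of Ce (fun _ hW g => t.Et_cone_vanish he αe βe hT hW g)

lemma Mt_cone_ge {M₀ M₁ Cm : D} {m : M₀ ⟶ M₁} (hm : Mt t m)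
    (αm : M₁ ⟶ Cm) (βm : Cm ⟶ M₀⟦(1:ℤ)⟧)
    (hT : Triangle.mk m αm βm ∈ distTriang D) : Cm ∈ t.ge := by
  apply t.mem_ge_of
  intro A hA g
  have hbij := (t.Mt_iff m).1 hm
  obtain ⟨x, hx⟩ := (shiftFunctor D (1:ℤ)).map_surjective (g ≫ βm)
  have h31 : βm ≫ m⟦(1:ℤ)⟧' = 0 := comp_distTriang_mor_zero₃₁ _ hT
  have hxm : x ≫ m = 0 := by
    apply (shiftFunctor D (1:ℤ)).map_injective
    rw [Functor.map_comp, hx, assoc, h31, comp_zero, Functor.map_zero]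
  have hx0 : x = 0 := by
    apply (hbij A hA).1
    show x ≫ m = 0 ≫ m
    rw [hxm, zero_comp]
  have hgβ : g ≫ βm = 0 := by rw [← hx, hx0, Functor.map_zero]
  obtain ⟨h, hh⟩ := Triangle.coyoneda_exact₃ _ hT g hgβ
  have hh2 : g = h ≫ αm := hh
  obtain ⟨h', hh'⟩ := (hbij _ (t.shift_le hA)).2 h
  have hh3 : h' ≫ m = h := hh'
  have h12 : m ≫ αm = 0 := comp_distTriang_mor_zero₁₂ _ hT
  erw [hh2, ← hh3, assoc, h12, comp_zero]

lemma beta_rho {E₀ E₁ Ce : D} {e : E₀ ⟶ E₁} (he : Et t e)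
    (αe : E₁ ⟶ Ce) (βe : Ce ⟶ E₀⟦(1:ℤ)⟧)
    (hT : Triangle.mk e αe βe ∈ distTriang D) :
    βe ≫ (t.ρ.app E₀)⟦(1:ℤ)⟧' = 0 := by
  have h31 : βe ≫ e⟦(1:ℤ)⟧' = 0 := comp_distTriang_mor_zero₃₁ _ hT
  haveI : IsIso (t.tge.map e) := he
  rw [← cancel_mono ((t.tge.map e)⟦(1:ℤ)⟧'), zero_comp, assoc, ← Functor.map_comp]
  have hnat : t.ρ.app E₀ ≫ t.tge.map e = e ≫ t.ρ.app E₁ := by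
    simpa using (t.ρ.naturality e).symm
  rw [hnat, Functor.map_comp, ← assoc, h31, zero_comp]

lemma beta_post_inj {M₀ M₁ Cm : D} {m : M₀ ⟶ M₁} (hm : Mt t m)
    (αm : M₁ ⟶ Cm) (βm : Cm ⟶ M₀⟦(1:ℤ)⟧)
    (hT : Triangle.mk m αm βm ∈ distTriang D)
    {C' : D} (hC' : C' ∈ t.le) :
    Function.Injective (fun φ : C' ⟶ Cm => φ ≫ βm) := by
  intro φ φ' hφφ
  have h0 : (φ - φ') ≫ βm = 0 := by
    rw [Preadditive.sub_comp, sub_eq_zero]; exact hφφ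
  obtain ⟨h, hh⟩ := Triangle.coyoneda_exact₃ _ hT (φ - φ') h0
  have hh2 : φ - φ' = h ≫ αm := hh
  obtain ⟨h', hh'⟩ := ((t.Mt_iff m).1 hm _ hC').2 h
  have hh3 : h' ≫ m = h := hh'
  have h12 : m ≫ αm = 0 := comp_distTriang_mor_zero₁₂ _ hT
  erw [← sub_eq_zero, hh2, ← hh3, assoc, h12, comp_zero]


/-! ### Homotopy orthogonality of `Et` against `Mt` -/

lemma iso_of_le_post {A B : D} (hA : A ∈ t.le) (hB : B ∈ t.le) (f : A ⟶ B)
    (h : ∀ A', A' ∈ t.le → Function.Bijective (fun g : A' ⟶ A => g ≫ f)) :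
    IsIso f := by
  obtain ⟨k, hk⟩ := (h B hB).2 (𝟙 B)
  have hk1 : k ≫ f = 𝟙 B := hk
  have hk2 : f ≫ k = 𝟙 A := by
    apply (h A hA).1
    show (f ≫ k) ≫ f = 𝟙 A ≫ f
    rw [assoc, hk1, comp_id, id_comp]
  exact ⟨k, hk2, hk1⟩

lemma HOrth_of {E₀ E₁ M₀ M₁ : D} {e : E₀ ⟶ E₁} {m : M₀ ⟶ M₁}
    (he : Et t e) (hm : Mt t m) : HOrth e m := by
  intro Ce αe βe hTe Cm αm βm hTm
  have hCe : Ce ∈ t.le := t.Et_cone_le he αe βe hTe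
  have hCm : Cm ∈ t.ge := t.Mt_cone_ge hm αm βm hTm
  constructor
  · intro φ
    have hφ : φ = 0 := t.hom_zero φ hCe (t.ge_neg_shift hCm)
    rw [hφ]; simp
  · have key : ∀ ψ : Ce ⟶ Cm, αe ≫ ψ ≫ βm = 0 → ψ = 0 := by
      intro ψ hψ
      obtain ⟨ξ, hξ₁⟩ := Triangle.yoneda_exact₃ _ hTe (ψ ≫ βm) hψ
      have hξ : ψ ≫ βm = βe ≫ ξ := hξ₁
      obtain ⟨ξ₀, hξ₀⟩ := (shiftFunctor D (1:ℤ)).map_surjective ξ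
      have hβρ := t.beta_rho he αe βe hTe
      have hC : (ψ ≫ βm) ≫ (t.ρ.app M₀)⟦(1:ℤ)⟧' = 0 := by
        erw [hξ, ← hξ₀, assoc, ← Functor.map_comp]
        have hnat : ξ₀ ≫ t.ρ.app M₀ = t.ρ.app E₀ ≫ t.tge.map ξ₀ := by
          exact t.ρ.naturality ξ₀
        erw [hnat, Functor.map_comp, ← assoc, hβρ, zero_comp]
      obtain ⟨A₀, B₀, a₀, b₀, δ₀, hA₀, hB₀, hT₀⟩ := t.tri M₀
      obtain ⟨b₀', hb₀'⟩ := (t.tge_univ M₀ hB₀).2 b₀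
      have hb₀2 : t.ρ.app M₀ ≫ b₀' = b₀ := hb₀'
      have hD : (ψ ≫ βm) ≫ b₀⟦(1:ℤ)⟧' = 0 := by
        rw [← hb₀2, Functor.map_comp, ← assoc, hC, zero_comp]
      have hT₀'' := rot_of_distTriang _ (rot_of_distTriang _ hT₀)
      obtain ⟨w₁, hw₁⟩ := Triangle.coyoneda_exact₃ _ hT₀'' (ψ ≫ βm)
        (by erw [Preadditive.comp_neg, hD, neg_zero])
      have hw₁' : ψ ≫ βm = w₁ ≫ (-(a₀⟦(1:ℤ)⟧')) := hw₁
      have h31m : βm ≫ m⟦(1:ℤ)⟧' = 0 := comp_distTriang_mor_zero₃₁ _ hTm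
      have hF : (ψ ≫ βm) ≫ m⟦(1:ℤ)⟧' = 0 := by rw [assoc, h31m, comp_zero]
      have hw2 : w₁ ≫ (a₀ ≫ m)⟦(1:ℤ)⟧' = 0 := by
        have h' := hF
        rw [hw₁'] at h'
        erw [Functor.map_comp, ← assoc, ← neg_eq_zero, ← Preadditive.neg_comp,
          ← Preadditive.comp_neg]
        exact h'
      obtain ⟨A₁, B₁, a₁, b₁, δ₁, hA₁, hB₁, hT₁⟩ := t.tri M₁
      obtain ⟨abar, habar₁⟩ := Triangle.coyoneda_exact₂ _ hT₁ (a₀ ≫ m)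
        (t.hom_zero _ hA₀ hB₁)
      have habar : a₀ ≫ m = abar ≫ a₁ := habar₁
      have habiso : IsIso abar := by
        apply t.iso_of_le_post hA₀ hA₁
        intro A' hA'
        have h₁ := t.triA_bij hT₀ hB₀ A' hA'
        have h₃ := (t.Mt_iff m).1 hm A' hA'
        have hcomp : (fun g : A' ⟶ A₁ => g ≫ a₁) ∘ (fun g : A' ⟶ A₀ => g ≫ abar)
            = (fun g : A' ⟶ M₀ => g ≫ m) ∘ (fun g : A' ⟶ A₀ => g ≫ a₀) := by
          funext g
          simp only [Function.comp]
          erw [assoc, ← habar, ← assoc]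
        have hb : Function.Bijective ((fun g : A' ⟶ A₁ => g ≫ a₁) ∘
            (fun g : A' ⟶ A₀ => g ≫ abar)) := by
          rw [hcomp]; exact h₃.comp h₁
        exact (Function.Bijective.of_comp_iff' (t.triA_bij hT₁ hB₁ A' hA') _).1 hb
      have hw3 : (w₁ ≫ abar⟦(1:ℤ)⟧') ≫ a₁⟦(1:ℤ)⟧' = 0 := by
        erw [assoc, ← Functor.map_comp, ← habar, hw2]
      obtain ⟨y₁, hy₁⟩ := Triangle.coyoneda_exact₁ _ hT₁ (w₁ ≫ abar⟦(1:ℤ)⟧') hw3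
      have hy₁' : w₁ ≫ abar⟦(1:ℤ)⟧' = y₁ ≫ δ₁ := hy₁
      have hy₁0 : y₁ = 0 := t.hom_zero y₁ hCe hB₁
      have hw0 : w₁ = 0 := by
        haveI : IsIso (abar⟦(1:ℤ)⟧') := inferInstance
        erw [← cancel_mono (abar⟦(1:ℤ)⟧'), zero_comp, hy₁', hy₁0, zero_comp]; rfl
      have hψβ : ψ ≫ βm = 0 := by erw [hw₁', hw0, zero_comp]
      exact (t.beta_post_inj hm αm βm hTm hCe)
        (show ψ ≫ βm = 0 ≫ βm by rw [hψβ, zero_comp])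
    intro φ φ' hφφ
    have h0 : αe ≫ (φ - φ') ≫ βm = 0 := by
      have hφφ' : αe ≫ φ ≫ βm = αe ≫ φ' ≫ βm := hφφ
      rw [Preadditive.sub_comp, Preadditive.comp_sub, hφφ', sub_self]
    have := key _ h0
    rwa [sub_eq_zero] at this


/-! ### Degenerate members of `Et` and `Mt` -/

lemma Et_into_zero {A : D} (hA : A ∈ t.le) : Et t (0 : A ⟶ (0:D)) :=
  isIso_of_isZero _ (t.isZero_tge_of A (fun W hW f => t.hom_zero f hA hW))
    (t.isZero_tge_of _ (fun _ _ f => (isZero_zero D).eq_of_src f 0))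

lemma Et_from_zero {A : D} (hA : A ∈ t.le) : Et t (0 : (0:D) ⟶ A) :=
  isIso_of_isZero _ (t.isZero_tge_of _ (fun _ _ f => (isZero_zero D).eq_of_src f 0))
    (t.isZero_tge_of A (fun W hW f => t.hom_zero f hA hW))

lemma Mt_into_zero {B : D} (hB : B⟦(1:ℤ)⟧ ∈ t.ge) : Mt t (0 : B ⟶ (0:D)) :=
  isIso_of_isZero _ (t.isZero_tle_of B (fun A hA f => t.hom_zero f hA hB))
    (t.isZero_tle_of _ (fun _ _ f => (isZero_zero D).eq_of_tgt f 0))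

lemma Mt_from_zero {B : D} (hB : B⟦(1:ℤ)⟧ ∈ t.ge) : Mt t (0 : (0:D) ⟶ B) :=
  isIso_of_isZero _ (t.isZero_tle_of _ (fun _ _ f => (isZero_zero D).eq_of_tgt f 0))
    (t.isZero_tle_of B (fun A hA f => t.hom_zero f hA hB))

/-! ### Extraction of `Mt` and `Et` from orthogonality -/

lemma rightOrth_le {M₀ M₁ : D} (m : M₀ ⟶ M₁) (h : rightOrth (Et t) m) :
    Mt t m := by
  obtain ⟨Cm, αm, βm, hTm⟩ := distinguished_cocone_triangle m
  have c1 : ∀ A, A ∈ t.le → ∀ g : A⟦(1:ℤ)⟧ ⟶ Cm, g = 0 := by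
    intro A hA g
    obtain ⟨C, α₁, β₁, hT₁⟩ := distinguished_cocone_triangle (0 : A ⟶ (0:D))
    have hinj := (h _ (t.Et_into_zero hA) C α₁ β₁ hT₁ Cm αm βm hTm).2
    have hallzero : ∀ ψ : C ⟶ Cm, ψ = 0 := by
      intro ψ
      apply hinj (a₂ := 0)
      show α₁ ≫ ψ ≫ βm = α₁ ≫ 0 ≫ βm
      rw [(isZero_zero D).eq_of_src α₁ 0, zero_comp, zero_comp]
    have hβiso : IsIso β₁ :=
      (Triangle.isZero₁_iff_isIso₂ _ (rot_of_distTriang _ hT₁)).1 (isZero_zero D)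
    have hz : β₁ ≫ g = 0 := hallzero _
    rw [← cancel_epi β₁, comp_zero]
    exact hz
  have c2 : ∀ A, A ∈ t.le → ∀ ψ : A ⟶ Cm, ψ ≫ βm = 0 → ψ = 0 := by
    intro A hA ψ hψ
    obtain ⟨C', α₂, β₂, hT₂⟩ := distinguished_cocone_triangle (0 : (0:D) ⟶ A)
    have hinj := (h _ (t.Et_from_zero hA) C' α₂ β₂ hT₂ Cm αm βm hTm).2
    have hα₂ : IsIso α₂ := (Triangle.isZero₁_iff_isIso₂ _ hT₂).1 (isZero_zero D)
    have h1 : inv α₂ ≫ ψ = 0 := by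
      apply hinj (a₂ := 0)
      show α₂ ≫ (inv α₂ ≫ ψ) ≫ βm = α₂ ≫ 0 ≫ βm
      rw [← assoc, ← assoc, IsIso.hom_inv_id, id_comp, hψ]
      simp
    calc ψ = α₂ ≫ (inv α₂ ≫ ψ) := by rw [← assoc, IsIso.hom_inv_id, id_comp]
    _ = 0 := by rw [h1, comp_zero]
  rw [Mt_iff]
  intro A hA
  constructor
  · intro x x' hxx
    have h0 : (x - x') ≫ m = 0 := by
      rw [Preadditive.sub_comp, sub_eq_zero]; exact hxx
    obtain ⟨q, hq⟩ := Triangle.coyoneda_exact₂ _ (inv_rot_of_distTriang _ hTm)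
      (x - x') (by exact h0)
    have hq0 : q = 0 := by
      have h2 : q⟦(1:ℤ)⟧' ≫ (shiftEquiv D (1:ℤ)).counitIso.hom.app Cm = 0 :=
        c1 A hA _
      have h3 : q⟦(1:ℤ)⟧' = 0 := by
        exact (cancel_mono ((shiftEquiv D (1:ℤ)).counitIso.hom.app Cm)).1 (h2.trans zero_comp.symm)

      apply (shiftFunctor D (1:ℤ)).map_injective
      rw [h3, Functor.map_zero]
    rw [hq0, zero_comp] at hq
    exact sub_eq_zero.1 hq
  · intro h₀
    have h23 : αm ≫ βm = 0 := comp_distTriang_mor_zero₂₃ _ hTm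
    have h1 : (h₀ ≫ αm) ≫ βm = 0 := by rw [assoc, h23, comp_zero]
    have h2 : h₀ ≫ αm = 0 := c2 A hA _ h1
    obtain ⟨x, hx⟩ := Triangle.coyoneda_exact₂ _ hTm h₀ h2
    exact ⟨x, hx.symm⟩

lemma leftOrth_et {E₀ E₁ : D} (e : E₀ ⟶ E₁) (h : leftOrth (Mt t) e) :
    Et t e := by
  obtain ⟨Ce, αe, βe, hTe⟩ := distinguished_cocone_triangle e
  have dag : ∀ B, B⟦(1:ℤ)⟧ ∈ t.ge → ∀ g : Ce ⟶ B, g = 0 := by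
    intro B hB g
    obtain ⟨C₂, α₂, β₂, hT₂⟩ := distinguished_cocone_triangle (0 : (0:D) ⟶ B)
    have hinj := (h _ (t.Mt_from_zero hB) Ce αe βe hTe C₂ α₂ β₂ hT₂).2
    have hβ0 : β₂ = 0 := (isZero_shift (isZero_zero D) 1).eq_of_tgt _ _
    have hall : ∀ ψ : Ce ⟶ C₂, ψ = 0 := by
      intro ψ
      apply hinj (a₂ := 0)
      show αe ≫ ψ ≫ β₂ = αe ≫ 0 ≫ β₂
      rw [hβ0]
      simp
    have hα₂ : IsIso α₂ := (Triangle.isZero₁_iff_isIso₂ _ hT₂).1 (isZero_zero D)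
    have hz : g ≫ α₂ = 0 := hall _
    rw [← cancel_mono α₂, zero_comp]
    exact hz
  have key : βe ≫ (t.ρ.app E₀)⟦(1:ℤ)⟧' = 0 := by
    have hB : (t.tge.obj E₀)⟦(1:ℤ)⟧ ∈ t.ge := t.tge_mem E₀
    obtain ⟨C₁, α₁, β₁, hT₁⟩ :=
      distinguished_cocone_triangle (0 : t.tge.obj E₀ ⟶ (0:D))
    have hinj := (h _ (t.Mt_into_zero hB) Ce αe βe hTe C₁ α₁ β₁ hT₁).2
    have hβiso : IsIso β₁ :=
      (Triangle.isZero₁_iff_isIso₂ _ (rot_of_distTriang _ hT₁)).1 (isZero_zero D)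
    have h23 : αe ≫ βe = 0 := comp_distTriang_mor_zero₂₃ _ hTe
    have h1 : βe ≫ (t.ρ.app E₀)⟦(1:ℤ)⟧' ≫ inv β₁ = 0 := by
      apply hinj (a₂ := 0)
      show αe ≫ (βe ≫ (t.ρ.app E₀)⟦(1:ℤ)⟧' ≫ inv β₁) ≫ β₁ = αe ≫ 0 ≫ β₁
      rw [zero_comp, comp_zero]
      simp only [assoc, IsIso.inv_hom_id, comp_id]
      rw [reassoc_of% h23, zero_comp]
    have hrw : βe ≫ (t.ρ.app E₀)⟦(1:ℤ)⟧'
        = (βe ≫ (t.ρ.app E₀)⟦(1:ℤ)⟧' ≫ inv β₁) ≫ β₁ := by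
      simp only [assoc, IsIso.inv_hom_id, comp_id]
    rw [hrw, h1, zero_comp]
  rw [Et_iff]
  intro W hW
  constructor
  · intro x x' hxx
    have h0 : e ≫ (x - x') = 0 := by
      rw [Preadditive.comp_sub, sub_eq_zero]; exact hxx
    obtain ⟨y, hy⟩ := Triangle.yoneda_exact₂ _ hTe (x - x') h0
    have hy' : x - x' = αe ≫ y := hy
    rw [dag _ hW y, comp_zero] at hy'
    exact sub_eq_zero.1 hy'
  · intro g
    obtain ⟨g₁, hg₁⟩ := (t.tge_univ E₀ hW).2 g
    have hg₁' : t.ρ.app E₀ ≫ g₁ = g := hg₁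
    have hβg : βe ≫ g⟦(1:ℤ)⟧' = 0 := by
      rw [← hg₁', Functor.map_comp, ← assoc, key, zero_comp]
    have hn : (Triangle.mk e αe βe).invRotate.mor₁ ≫ g = 0 := by
      dsimp [Triangle.invRotate]
      erw [Preadditive.neg_comp, assoc, neg_eq_zero]
      have hnat : (shiftFunctorCompIsoId D (1:ℤ) (-1:ℤ) (by omega)).hom.app E₀ ≫ g
          = (g⟦(1:ℤ)⟧')⟦(-1:ℤ)⟧' ≫
            (shiftFunctorCompIsoId D (1:ℤ) (-1:ℤ) (by omega)).hom.app W :=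
        ((shiftFunctorCompIsoId D (1:ℤ) (-1:ℤ) (by omega)).hom.naturality g).symm
      erw [hnat, ← Functor.map_comp_assoc, hβg, Functor.map_zero, zero_comp]; rfl
    obtain ⟨y, hy⟩ := Triangle.yoneda_exact₂ _ (inv_rot_of_distTriang _ hTe) g hn
    exact ⟨y, hy.symm⟩

lemma Et_shift {X Y : D} (φ : X ⟶ Y) (hφ : Et t φ) : Et t (φ⟦(1:ℤ)⟧') := by
  rw [Et_iff] at hφ ⊢
  intro W hW
  have hWm : (W⟦(-1:ℤ)⟧)⟦(1:ℤ)⟧ ∈ t.ge := t.ge_neg_shift (t.shift_ge hW)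
  have h1 := hφ _ hWm
  set adj := (shiftEquiv D (1:ℤ)).toAdjunction with hadj
  have hcomp : (fun g : Y⟦(1:ℤ)⟧ ⟶ W => φ⟦(1:ℤ)⟧' ≫ g)
      = (adj.homEquiv X W).symm ∘ (fun g : Y ⟶ W⟦(-1:ℤ)⟧ => φ ≫ g) ∘
        (adj.homEquiv Y W) := by
    funext g
    simp only [Function.comp]
    apply (adj.homEquiv X W).injective
    rw [Equiv.apply_symm_apply]
    exact adj.homEquiv_naturality_left φ g
  rw [hcomp]
  exact (adj.homEquiv X W).symm.bijective.comp (h1.comp (adj.homEquiv Y W).bijective)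


/-! ### Factorization -/

lemma fact_exists {X Y : D} (f : X ⟶ Y) :
    ∃ (P : D) (e : X ⟶ P) (m : P ⟶ Y), Et t e ∧ Mt t m ∧ e ≫ m = f := by
  obtain ⟨AX, BX, aX, bX, δX, hAX, hBX, hTX⟩ := t.tri X
  obtain ⟨AY, BY, aY, bY, δY, hAY, hBY, hTY⟩ := t.tri Y
  obtain ⟨atil₀, hatil₁⟩ := Triangle.coyoneda_exact₂ _ hTY (aX ≫ f)
    (by erw [assoc]; exact t.hom_zero _ hAX hBY)
  let atil : AX ⟶ AY := atil₀
  have hatil : aX ≫ f = atil ≫ aY := hatil₁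
  obtain ⟨ψ₀, hψ1, hψ2⟩ := complete_distinguished_triangle_morphism
    (Triangle.mk aX bX δX) (Triangle.mk aY bY δY) hTX hTY atil f hatil
  let ψ : BX ⟶ BY := ψ₀
  have hψ1' : bX ≫ ψ = f ≫ bY := hψ1
  have hψ2' : δX ≫ atil⟦(1:ℤ)⟧' = ψ ≫ δY := hψ2
  let θ : Triangle.mk aX bX δX ⟶ Triangle.mk aY bY δY :=
    { hom₁ := atil, hom₂ := f, hom₃ := ψ,
      comm₁ := hatil, comm₂ := hψ1', comm₃ := hψ2' }
  have hγcomm : (Triangle.mk aX bX δX).invRotate.mor₁ ≫ atil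
      = ψ⟦(-1:ℤ)⟧' ≫ (Triangle.mk aY bY δY).invRotate.mor₁ :=
    ((invRotate D).map θ).comm₁
  obtain ⟨P, s, t', hTP⟩ := distinguished_cocone_triangle
    ((Triangle.mk aX bX δX).invRotate.mor₁ ≫ atil)
  obtain ⟨m₀, hm1, hm2⟩ := complete_distinguished_triangle_morphism
    (Triangle.mk ((Triangle.mk aX bX δX).invRotate.mor₁ ≫ atil) s t')
    ((Triangle.mk aY bY δY).invRotate) hTP (inv_rot_of_distTriang _ hTY)
    (ψ⟦(-1:ℤ)⟧') (𝟙 AY) (by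
      show ((Triangle.mk aX bX δX).invRotate.mor₁ ≫ atil) ≫ 𝟙 AY
          = ψ⟦(-1:ℤ)⟧' ≫ (Triangle.mk aY bY δY).invRotate.mor₁
      rw [comp_id]; exact hγcomm)
  let m : P ⟶ Y := m₀
  have hm1' : s ≫ m = aY := by
    have h : s ≫ m = 𝟙 AY ≫ aY := hm1
    rw [id_comp] at h
    exact h
  obtain ⟨e₀, he1, he2⟩ := complete_distinguished_triangle_morphism
    ((Triangle.mk aX bX δX).invRotate)
    (Triangle.mk ((Triangle.mk aX bX δX).invRotate.mor₁ ≫ atil) s t')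
    (inv_rot_of_distTriang _ hTX) hTP (𝟙 _) atil (by
      show (Triangle.mk aX bX δX).invRotate.mor₁ ≫ atil
          = 𝟙 ((Triangle.mk aX bX δX).invRotate.obj₁) ≫
            ((Triangle.mk aX bX δX).invRotate.mor₁ ≫ atil)
      rw [id_comp])
  let eP : X ⟶ P := e₀
  have he1' : aX ≫ eP = atil ≫ s := he1
  set cX := (shiftEquiv D (1:ℤ)).counitIso.inv.app BX with hcX
  set cY := (shiftEquiv D (1:ℤ)).counitIso.inv.app BY with hcY
  haveI : IsIso cX := by
    rw [show cX = ((shiftEquiv D (1:ℤ)).counitIso.app BX).inv from rfl]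
    infer_instance
  haveI : IsIso cY := by
    rw [show cY = ((shiftEquiv D (1:ℤ)).counitIso.app BY).inv from rfl]
    infer_instance
  have hmb : m ≫ (bY ≫ cY) = t' ≫ (ψ⟦(-1:ℤ)⟧')⟦(1:ℤ)⟧' := hm2.symm
  have he2' : eP ≫ t' = bX ≫ cX := by
    have h : (Triangle.mk aX bX δX).invRotate.mor₃ ≫
        (𝟙 ((Triangle.mk aX bX δX).invRotate.obj₁))⟦(1:ℤ)⟧' = eP ≫ t' := he2
    rw [(shiftFunctor D (1:ℤ)).map_id, comp_id] at h
    exact h.symm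
  have hcnat : cX ≫ (ψ⟦(-1:ℤ)⟧')⟦(1:ℤ)⟧' = ψ ≫ cY :=
    ((shiftEquiv D (1:ℤ)).counitIso.inv.naturality ψ).symm
  have hEMb : (eP ≫ m) ≫ (bY ≫ cY) = (f ≫ bY) ≫ cY := by
    erw [assoc, hmb, ← assoc, he2', assoc, hcnat, ← assoc, hψ1']
  have hx0 : aX ≫ (eP ≫ m - f) = 0 := by
    rw [Preadditive.comp_sub, ← assoc, he1', assoc, hm1', ← hatil, sub_self]
  obtain ⟨ξ, hξ⟩ := Triangle.yoneda_exact₂ _ hTX (eP ≫ m - f) hx0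
  have hξ' : eP ≫ m - f = bX ≫ ξ := hξ
  have h9 : (eP ≫ m) ≫ bY = f ≫ bY := by
    apply (cancel_mono cY).1
    rw [assoc]
    exact hEMb
  have hxb : (eP ≫ m - f) ≫ bY = 0 := by
    rw [Preadditive.sub_comp, h9, sub_self]
  have hξb0 : ξ ≫ bY = 0 := by
    apply (t.triB_bij hTX hAX BY hBY).1
    show bX ≫ ξ ≫ bY = bX ≫ 0
    erw [← assoc, ← hξ', hxb, comp_zero]
  obtain ⟨η, hη⟩ := Triangle.coyoneda_exact₂ _ hTY ξ hξb0
  have hη' : ξ = η ≫ aY := hη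
  have hst : s ≫ t' = 0 := comp_distTriang_mor_zero₂₃ _ hTP
  refine ⟨P, eP - bX ≫ η ≫ s, m, ?_, ?_, ?_⟩
  · rw [Et_iff]
    intro W hW
    have het' : (eP - bX ≫ η ≫ s) ≫ t' = bX ≫ cX := by
      rw [Preadditive.sub_comp, he2']
      have hz : (bX ≫ η ≫ s) ≫ t' = 0 := by
        erw [assoc, assoc, hst, comp_zero, comp_zero]
      erw [hz, sub_zero]
    have ht'bij : Function.Bijective
        (fun ζ : (BX⟦(-1:ℤ)⟧)⟦(1:ℤ)⟧ ⟶ W => t' ≫ ζ) := by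
      constructor
      · intro ζ ζ' hζζ
        have h0 : t' ≫ (ζ - ζ') = 0 := by
          erw [Preadditive.comp_sub, sub_eq_zero]; exact hζζ
        obtain ⟨y, hy⟩ := Triangle.yoneda_exact₃ _ (rot_of_distTriang _ hTP)
          (ζ - ζ') h0
        rw [t.hom_zero y (t.shift_le hAY) hW, comp_zero] at hy
        exact sub_eq_zero.1 hy
      · intro ζ'
        obtain ⟨y, hy⟩ := Triangle.yoneda_exact₃ _ hTP ζ'
          (t.hom_zero _ hAY hW)
        exact ⟨y, hy.symm⟩
    have hcXbij : Function.Bijective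
        (fun ζ : (BX⟦(-1:ℤ)⟧)⟦(1:ℤ)⟧ ⟶ W => cX ≫ ζ) := by
      constructor
      · intro a b hab
        exact (cancel_epi ((shiftEquiv D (1:ℤ)).counitIso.app BX).inv).1 hab
      · intro x
        exact ⟨((shiftEquiv D (1:ℤ)).counitIso.app BX).hom ≫ x, Iso.inv_hom_id_assoc ((shiftEquiv D (1:ℤ)).counitIso.app BX) x⟩
    have hcomp : (fun x : P ⟶ W => (eP - bX ≫ η ≫ s) ≫ x) ∘
        (fun ζ : (BX⟦(-1:ℤ)⟧)⟦(1:ℤ)⟧ ⟶ W => t' ≫ ζ)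
        = (fun x : BX ⟶ W => bX ≫ x) ∘
          (fun ζ : (BX⟦(-1:ℤ)⟧)⟦(1:ℤ)⟧ ⟶ W => cX ≫ ζ) := by
      funext ζ
      simp only [Function.comp]
      erw [← assoc, het', assoc]; rfl
    have hb2 : Function.Bijective ((fun x : P ⟶ W => (eP - bX ≫ η ≫ s) ≫ x) ∘
        (fun ζ : (BX⟦(-1:ℤ)⟧)⟦(1:ℤ)⟧ ⟶ W => t' ≫ ζ)) := by
      rw [hcomp]
      exact (t.triB_bij hTX hAX W hW).comp hcXbij
    exact (Function.Bijective.of_comp_iff _ ht'bij).1 hb2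
  · rw [Mt_iff]
    intro A hA
    have hsbij : Function.Bijective (fun g : A ⟶ AY => g ≫ s) := by
      constructor
      · intro x x' hxx
        have h0 : (x - x') ≫ s = 0 := by
          rw [Preadditive.sub_comp, sub_eq_zero]; exact hxx
        obtain ⟨y, hy⟩ := Triangle.coyoneda_exact₂ _ hTP (x - x') h0
        rw [t.hom_zero y hA (t.ge_neg_shift (t.shift_ge hBX)), zero_comp] at hy
        exact sub_eq_zero.1 hy
      · intro p
        have hge : ((BX⟦(-1:ℤ)⟧)⟦(1:ℤ)⟧)⟦(1:ℤ)⟧ ∈ t.ge :=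
          t.ge_iso ((shiftFunctor D (1:ℤ)).mapIso
            ((shiftEquiv D (1:ℤ)).counitIso.app BX).symm) hBX
        obtain ⟨y, hy⟩ := Triangle.coyoneda_exact₃ _ hTP p
          (t.hom_zero _ hA hge)
        exact ⟨y, hy.symm⟩
    have hcomp : (fun g : A ⟶ P => g ≫ m) ∘ (fun g : A ⟶ AY => g ≫ s)
        = (fun g : A ⟶ AY => g ≫ aY) := by
      funext g
      simp only [Function.comp]
      rw [assoc, hm1']
    have hb := t.triA_bij hTY hBY A hA
    rw [← hcomp] at hb
    exact (Function.Bijective.of_comp_iff _ hsbij).1 hb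
  · have hzs : (bX ≫ η ≫ s) ≫ m = bX ≫ ξ := by
      erw [assoc, assoc, hm1', ← hη']
    rw [Preadditive.sub_comp, hzs, ← hξ']
    exact sub_sub_cancel _ _

/-! ### Normality -/

lemma normal_aux {X T : D} (e : X ⟶ T) (m : T ⟶ (0:D)) (he : Et t e) (hm : Mt t m)
    {R : D} (r : R ⟶ X) (δ₁ : T ⟶ R⟦(1:ℤ)⟧)
    (hT₁ : Triangle.mk r e δ₁ ∈ distTriang D) : Et t (0 : R ⟶ (0:D)) := by
  have hz0 : IsZero (t.tle.obj (0:D)) :=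
    t.isZero_tle_of _ (fun _ _ f => (isZero_zero D).eq_of_tgt f 0)
  haveI : IsIso (t.tle.map m) := hm
  have hzT : IsZero (t.tle.obj T) := hz0.of_iso (asIso (t.tle.map m))
  have hhomT : ∀ A, A ∈ t.le → ∀ f : A ⟶ T, f = 0 := by
    intro A hA f
    obtain ⟨f', hf'⟩ := (t.tle_univ hA T).2 f
    have hf'' : f' ≫ t.σ.app T = f := hf'
    rw [← hf'', hzT.eq_of_tgt f' 0, zero_comp]
  obtain ⟨AX, BX, aX, bX, δX, hAX, hBX, hTX⟩ := t.tri X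
  obtain ⟨u₀, hu⟩ := Triangle.coyoneda_exact₂ _ hT₁ aX (hhomT _ hAX _)
  let u : AX ⟶ R := u₀
  have hu' : aX = u ≫ r := hu
  obtain ⟨v₀, hv1, hv2⟩ := complete_distinguished_triangle_morphism
    (Triangle.mk aX bX δX) (Triangle.mk r e δ₁) hTX hT₁ u (𝟙 X)
    (by show aX ≫ 𝟙 X = u ≫ r; rw [comp_id]; exact hu')
  let v : BX ⟶ T := v₀
  have hv2' : δX ≫ u⟦(1:ℤ)⟧' = v ≫ δ₁ := hv2
  have hv1' : bX ≫ v = e := by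
    have h : bX ≫ v = 𝟙 X ≫ e := hv1
    rw [id_comp] at h
    exact h
  have hvbij : ∀ W, W⟦(1:ℤ)⟧ ∈ t.ge →
      Function.Bijective (fun g : T ⟶ W => v ≫ g) := by
    intro W hW
    have h2 := (t.Et_iff e).1 he W hW
    have hcomp : ((fun x : BX ⟶ W => bX ≫ x) ∘ (fun g : T ⟶ W => v ≫ g))
        = (fun g : T ⟶ W => e ≫ g) := by
      funext g
      simp only [Function.comp]
      rw [← assoc, hv1']
    have hb : Function.Bijective ((fun x : BX ⟶ W => bX ≫ x) ∘
        (fun g : T ⟶ W => v ≫ g)) := by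
      rw [hcomp]; exact h2
    exact (Function.Bijective.of_comp_iff' (t.triB_bij hTX hAX W hW) _).1 hb
  obtain ⟨s₀, hs₀⟩ := (hvbij BX hBX).2 (𝟙 BX)
  have hs₀' : v ≫ s₀ = 𝟙 BX := hs₀
  obtain ⟨AT, BT, aT, bT, δT, hAT, hBT, hTT⟩ := t.tri T
  obtain ⟨qT, hqT⟩ := Triangle.yoneda_exact₂ _ hTT (𝟙 T)
    (by show aT ≫ 𝟙 T = 0; rw [comp_id, hhomT _ hAT aT])
  have hqT' : 𝟙 T = bT ≫ qT := hqT
  have hs₀v : s₀ ≫ v = 𝟙 T := by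
    have h5 : v ≫ (s₀ ≫ v ≫ bT) = v ≫ bT := by
      rw [← assoc, hs₀', id_comp]
    have h6 : s₀ ≫ v ≫ bT = bT := (hvbij BT hBT).1 h5
    calc s₀ ≫ v = (s₀ ≫ v) ≫ 𝟙 T := (comp_id _).symm
    _ = (s₀ ≫ v) ≫ bT ≫ qT := by rw [← hqT']
    _ = (s₀ ≫ v ≫ bT) ≫ qT := by simp only [assoc]; erw [assoc, assoc]
    _ = bT ≫ qT := by rw [h6]
    _ = 𝟙 T := hqT'.symm
  haveI hviso : IsIso v := ⟨s₀, hs₀', hs₀v⟩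
  let φT : Triangle.mk aX bX δX ⟶ Triangle.mk r e δ₁ :=
    { hom₁ := u, hom₂ := 𝟙 X, hom₃ := v,
      comm₁ := by show aX ≫ 𝟙 X = u ≫ r; rw [comp_id]; exact hu',
      comm₂ := by show bX ≫ v = 𝟙 X ≫ e; rw [id_comp]; exact hv1',
      comm₃ := hv2' }
  haveI h2' : IsIso φT.hom₂ := by dsimp [φT]; exact IsIso.id X
  haveI h3' : IsIso φT.hom₃ := by dsimp [φT]; exact hviso
  haveI hui : IsIso u := isIso₁_of_isIso₂₃ φT hTX hT₁ h2' h3'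
  have hR : ∀ W, W⟦(1:ℤ)⟧ ∈ t.ge → ∀ f : R ⟶ W, f = 0 := by
    intro W hW f
    have h : u ≫ f = 0 := t.hom_zero _ hAX hW
    rw [← cancel_epi u, comp_zero]
    exact h
  exact isIso_of_isZero _ (t.isZero_tge_of R hR)
    (t.isZero_tge_of _ (fun _ _ f => (isZero_zero D).eq_of_src f 0))

end TData

end Aux

section Statements

variable {D : Type u} [Category.{v} D] [HasZeroObject D] [Preadditive D]
  [HasShift D ℤ] [∀ n : ℤ, (shiftFunctor D n).Additive] [Pretriangulated D]

/-- Lemma 2.9: `(E_t, M_t)` is a normal triangulated torsion theory. -/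
theorem Ft_is_normal_TTT (t : TData D) : IsNormalTTT (Et t) (Mt t) := by
  refine
    { right_eq := ?_
      left_eq := ?_
      shiftE := ?_
      fact := ?_
      three_E := ?_
      three_M := ?_
      normal := ?_ }
  case refine_3 =>
    intro X Y f hf
    exact t.Et_shift f hf
  case refine_4 =>
    intro X Y f
    exact t.fact_exists f
  case refine_7 =>
    intro X T e m he hm R r δ hT
    exact t.normal_aux e m he hm r δ hT
  · funext A B m
    apply propext
    constructor
    · intro h
      exact t.rightOrth_le m h
    · intro hm A' B' e he
      exact t.HOrth_of he hm
  · funext A B e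
    apply propext
    constructor
    · intro h
      exact t.leftOrth_et e h
    · intro he A' B' m hm
      exact t.HOrth_of he hm
  · intro X Y Z f g
    refine ⟨?_, ?_, ?_⟩
    · intro hf hg
      show IsIso (t.tge.map (f ≫ g))
      rw [Functor.map_comp]
      haveI : IsIso (t.tge.map f) := hf
      haveI : IsIso (t.tge.map g) := hg
      infer_instance
    · intro hf hfg
      haveI : IsIso (t.tge.map f) := hf
      haveI : IsIso (t.tge.map f ≫ t.tge.map g) := by
        rw [← Functor.map_comp]; exact hfg
      show IsIso (t.tge.map g)
      exact IsIso.of_isIso_comp_left (t.tge.map f) (t.tge.map g)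
    · intro hg hfg
      haveI : IsIso (t.tge.map g) := hg
      haveI : IsIso (t.tge.map f ≫ t.tge.map g) := by
        rw [← Functor.map_comp]; exact hfg
      show IsIso (t.tge.map f)
      exact IsIso.of_isIso_comp_right (t.tge.map f) (t.tge.map g)
  · intro X Y Z f g
    refine ⟨?_, ?_, ?_⟩
    · intro hf hg
      show IsIso (t.tle.map (f ≫ g))
      rw [Functor.map_comp]
      haveI : IsIso (t.tle.map f) := hf
      haveI : IsIso (t.tle.map g) := hg
      infer_instance
    · intro hf hfg
      haveI : IsIso (t.tle.map f) := hf
      haveI : IsIso (t.tle.map f ≫ t.tle.map g) := by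
        rw [← Functor.map_comp]; exact hfg
      show IsIso (t.tle.map g)
      exact IsIso.of_isIso_comp_left (t.tle.map f) (t.tle.map g)
    · intro hg hfg
      haveI : IsIso (t.tle.map g) := hg
      haveI : IsIso (t.tle.map f ≫ t.tle.map g) := by
        rw [← Functor.map_comp]; exact hfg
      show IsIso (t.tle.map f)
      exact IsIso.of_isIso_comp_right (t.tle.map f) (t.tle.map g)

end Statements
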